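/- Let 𝒫 be a polymatroid on [p] with cage m ∈ ℕ^p and let b ∈ ℕ^p be such that 𝒫 − b = {n − b : n ∈ B(𝒫)∩ℕ^p, n ≥ b} is nonempty (it is an M-convex set, hence a polymatroid). Then for every n ∈ ℕ^p with n ≥ b one has μ_𝒫(n) = μ_{𝒫 − b}(n − b). -/

import Mathlib

open scoped BigOperators

attribute [local instance] Classical.propDecidable

namespace CavePaper

variable {p : ℕ}

/-- `rk` is the rank function of a polymatroid on `[p]` with cage `m`:
normalized, monotone, submodular, and `rk {i} ≤ m i` for all `i`. -/
def IsPolymatroid (m : Fin p → ℕ) (rk : Finset (Fin p) → ℕ) : Prop :=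
  rk ∅ = 0 ∧
    (∀ J₁ J₂ : Finset (Fin p), J₁ ⊆ J₂ → rk J₁ ≤ rk J₂) ∧
    (∀ J₁ J₂ : Finset (Fin p), rk (J₁ ∩ J₂) + rk (J₁ ∪ J₂) ≤ rk J₁ + rk J₂) ∧
    (∀ i : Fin p, rk {i} ≤ m i)

/-- An integer point lies in the independence polytope `I(𝒫)`. -/
def inIndep (rk : Finset (Fin p) → ℕ) (v : Fin p → ℤ) : Prop :=
  (∀ i, 0 ≤ v i) ∧ ∀ J : Finset (Fin p), ∑ j ∈ J, v j ≤ (rk J : ℤ)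

/-- An integer point lies in the base polytope `B(𝒫)`. -/
def inBase (rk : Finset (Fin p) → ℕ) (v : Fin p → ℤ) : Prop :=
  inIndep rk v ∧ ∑ i, v i = (rk Finset.univ : ℤ)

/-- The indicator function `1_𝒫` of the base polytope, at integer points. -/
noncomputable def baseInd (rk : Finset (Fin p) → ℕ) (v : Fin p → ℤ) : ℤ :=
  if inBase rk v then 1 else 0

/-- `max_{i<j} 1_𝒫(n - e_i + e_j)`. -/
noncomputable def cmax (rk : Finset (Fin p) → ℕ) (n : Fin p → ℕ) (i : Fin p) : ℤ :=
  if ∃ j, i < j ∧ inBase rk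
      (fun k => (n k : ℤ) - (if k = i then 1 else 0) + (if k = j then 1 else 0))
    then 1 else 0

/-- The cave polynomial of a polymatroid: the expansion of
`∑_{n ∈ ℕ^p, |n| = rk(𝒫)} 1_𝒫(n) ∏_{i=1}^{p-1} (1 - max_{i<j} 1_𝒫(n-e_i+e_j) tᵢ⁻¹) tⁿ`.
Each factor `(1 - cᵢ tᵢ⁻¹) tᵢ^{nᵢ}` is written as `tᵢ^{nᵢ} - cᵢ tᵢ^{nᵢ-1}`, which is
legitimate since `cᵢ ≠ 0` forces `nᵢ ≥ 1`; the factor for the last index is `tᵢ^{nᵢ}`. -/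
noncomputable def cavePoly (rk : Finset (Fin p) → ℕ) : MvPolynomial (Fin p) ℤ :=
  ∑ n ∈ Finset.Nat.antidiagonalTuple p (rk Finset.univ),
    MvPolynomial.C (baseInd rk (fun i => (n i : ℤ))) *
      ∏ i : Fin p,
        if (i : ℕ) < p - 1 then
          MvPolynomial.X i ^ (n i) -
            MvPolynomial.C (cmax rk n i) * MvPolynomial.X i ^ (n i - 1)
        else MvPolynomial.X i ^ (n i)

/-- A set `S ⊆ ℤ^q` is M-convex: it is nonempty, finite, and satisfies the
symmetric exchange property. -/
def MConvex {q : ℕ} (S : Set (Fin q → ℤ)) : Prop :=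
  S.Nonempty ∧ S.Finite ∧
    ∀ u ∈ S, ∀ v ∈ S, ∀ i, v i < u i →
      ∃ j, u j < v j ∧
        (fun k => u k - (if k = i then 1 else 0) + (if k = j then 1 else 0)) ∈ S

/-- The Möbius function `μ_𝒫 : ℤ^p → ℤ` of a polymatroid: `0` outside `I(𝒫)`,
`1` on `B(𝒫)`, and `1 - ∑_{w ∈ (n + ℤ_{>0}^p) ∩ I(𝒫)} μ_𝒫(w)` on `I(𝒫) \ B(𝒫)`.
(Every integer point of `I(𝒫)` lies in the box `0 ≤ w i ≤ rk {i}`; the redundant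
condition `∑ n < ∑ w` — automatic for `p ≥ 1` — ensures termination.) -/
noncomputable def mobius (rk : Finset (Fin p) → ℕ) (n : Fin p → ℤ) : ℤ :=
  if inIndep rk n then
    if inBase rk n then 1
    else
      1 - ∑ w ∈ ((Finset.Icc (fun _ => (0 : ℤ)) (fun i => (rk {i} : ℤ))).filter
            (fun w => (∀ i, n i < w i) ∧ (∑ i, n i) < (∑ i, w i) ∧ inIndep rk w)).attach,
          mobius rk w.1
  else 0
termination_by ((rk Finset.univ : ℤ) - ∑ i, n i).toNat
decreasing_by
  have hm := w.2
  simp only [Finset.mem_filter] at hm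
  have h2 : (∑ i, w.1 i) ≤ (rk Finset.univ : ℤ) := by
    simpa using hm.2.2.2.2 Finset.univ
  have _h1 : (∑ i, n i) < ∑ i, w.1 i := hm.2.2.1
  omega

/-- The base polytope `B(𝒫) ⊆ ℝ^p`. -/
def BaseSet (rk : Finset (Fin p) → ℕ) : Set (Fin p → ℝ) :=
  {v | (∀ i, 0 ≤ v i) ∧ (∑ i, v i = (rk Finset.univ : ℝ)) ∧
    ∀ J : Finset (Fin p), ∑ j ∈ J, v j ≤ (rk J : ℝ)}

/-- The rank function `rk_S(J) = max_{u ∈ S} ∑_{j∈J} u_j` of a (finite, nonempty)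
M-convex set `S ⊆ ℕ^p`. -/
noncomputable def rkOf (S : Set (Fin p → ℤ)) (J : Finset (Fin p)) : ℕ :=
  sSup ((fun u => (∑ j ∈ J, u j).toNat) '' S)

lemma sum_add_ite (n : Fin p → ℤ) (i : Fin p) (J : Finset (Fin p)) :
    ∑ j ∈ J, (n j + if j = i then 1 else 0) =
      ∑ j ∈ J, n j + if i ∈ J then 1 else 0 := by
  rw [Finset.sum_add_distrib, Finset.sum_ite_eq' J i (fun _ => (1:ℤ))]

lemma tight_union {m : Fin p → ℕ} {rk : Finset (Fin p) → ℕ} (hP : IsPolymatroid m rk)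
    {n : Fin p → ℤ} (hn : inIndep rk n) {A B : Finset (Fin p)}
    (hA : ∑ j ∈ A, n j = (rk A : ℤ)) (hB : ∑ j ∈ B, n j = (rk B : ℤ)) :
    ∑ j ∈ A ∪ B, n j = (rk (A ∪ B) : ℤ) := by
  have hsub := hP.2.2.1 A B
  have h1 : ∑ j ∈ A ∪ B, n j + ∑ j ∈ A ∩ B, n j = ∑ j ∈ A, n j + ∑ j ∈ B, n j :=
    Finset.sum_union_inter
  have h2 := hn.2 (A ∩ B)
  have h3 := hn.2 (A ∪ B)
  have h4 : ((rk (A ∩ B) : ℤ) + rk (A ∪ B)) ≤ (rk A : ℤ) + rk B := by exact_mod_cast hsub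
  omega

lemma aug_step {m : Fin p → ℕ} {rk : Finset (Fin p) → ℕ} (hP : IsPolymatroid m rk)
    {n : Fin p → ℤ} (hn : inIndep rk n) (hlt : ∑ i, n i < (rk Finset.univ : ℤ)) :
    ∃ i : Fin p, inIndep rk (fun k => n k + if k = i then 1 else 0) := by
  by_contra hcon
  push_neg at hcon
  have key : ∀ i : Fin p, ∃ J : Finset (Fin p), i ∈ J ∧ ∑ j ∈ J, n j = (rk J : ℤ) := by
    intro i
    have h := hcon i
    rw [inIndep] at h
    push_neg at h
    obtain ⟨J, hJ0⟩ := h (fun k => by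
      show (0:ℤ) ≤ n k + if k = i then 1 else 0
      have := hn.1 k; split <;> omega)
    have hJ : (rk J : ℤ) < ∑ j ∈ J, (n j + if j = i then 1 else 0) := hJ0
    rw [sum_add_ite] at hJ
    have := hn.2 J
    by_cases hiJ : i ∈ J
    · rw [if_pos hiJ] at hJ
      exact ⟨J, hiJ, by omega⟩
    · rw [if_neg hiJ] at hJ; omega
  have grow : ∀ s : Finset (Fin p), ∃ U, s ⊆ U ∧ ∑ j ∈ U, n j = (rk U : ℤ) := by
    intro s
    induction s using Finset.induction with
    | empty => exact ⟨∅, Finset.Subset.refl _, by simp [hP.1]⟩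
    | @insert a s' ha ih =>
        obtain ⟨U, hsU, hU⟩ := ih
        obtain ⟨J, hiJ, hJ⟩ := key a
        refine ⟨J ∪ U, ?_, tight_union hP hn hJ hU⟩
        intro x hx'
        rcases Finset.mem_insert.mp hx' with h | h
        · exact Finset.mem_union_left _ (h ▸ hiJ)
        · exact Finset.mem_union_right _ (hsU h)
  obtain ⟨U, hU1, hU2⟩ := grow Finset.univ
  have hUu : U = Finset.univ := Finset.univ_subset_iff.mp hU1
  rw [hUu] at hU2
  omega

lemma extend_to_base {m : Fin p → ℕ} {rk : Finset (Fin p) → ℕ} (hP : IsPolymatroid m rk) :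
    ∀ k : ℕ, ∀ n : Fin p → ℤ, inIndep rk n →
      ((rk Finset.univ : ℤ) - ∑ i, n i) ≤ k →
      ∃ w, inBase rk w ∧ ∀ i, n i ≤ w i := by
  intro k
  induction k with
  | zero =>
      intro n hn hk
      have := hn.2 Finset.univ
      exact ⟨n, ⟨hn, by omega⟩, fun i => le_refl _⟩
  | succ k ih =>
      intro n hn hk
      by_cases heq : ∑ i, n i = (rk Finset.univ : ℤ)
      · exact ⟨n, ⟨hn, heq⟩, fun i => le_refl _⟩
      · have hlt : ∑ i, n i < (rk Finset.univ : ℤ) := lt_of_le_of_ne (hn.2 _) heq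
        obtain ⟨i, hi⟩ := aug_step hP hn hlt
        have hsum : ∑ k', (n k' + if k' = i then 1 else 0) = (∑ k', n k') + 1 := by
          rw [sum_add_ite, if_pos (Finset.mem_univ i)]
        have hs2 : ∑ k', (fun k' => n k' + if k' = i then 1 else 0) k' = (∑ k', n k') + 1 := hsum
        obtain ⟨w, hw, hge⟩ := ih _ hi (by rw [hs2]; omega)
        refine ⟨w, hw, fun j => ?_⟩
        have h5 : n j + (if j = i then (1:ℤ) else 0) ≤ w j := hge j
        split at h5 <;> omega

section translate

variable {m : Fin p → ℕ} {rk : Finset (Fin p) → ℕ} {b : Fin p → ℕ}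

def Sset (rk : Finset (Fin p) → ℕ) (b : Fin p → ℕ) : Set (Fin p → ℤ) :=
  {v : Fin p → ℤ | (∀ j, 0 ≤ v j) ∧ inBase rk (fun k => v k + (b k : ℤ))}

lemma Sset_sumJ {v : Fin p → ℤ} (hv : v ∈ Sset rk b) (J : Finset (Fin p)) :
    ∑ j ∈ J, v j + ∑ j ∈ J, (b j : ℤ) ≤ (rk J : ℤ) := by
  have h : ∑ j ∈ J, (v j + (b j : ℤ)) ≤ (rk J : ℤ) := hv.2.1.2 J
  rwa [Finset.sum_add_distrib] at h

lemma Sset_sumUniv {v : Fin p → ℤ} (hv : v ∈ Sset rk b) :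
    ∑ j, v j + ∑ j, (b j : ℤ) = (rk Finset.univ : ℤ) := by
  have h : ∑ j, (v j + (b j : ℤ)) = (rk Finset.univ : ℤ) := hv.2.2
  rwa [Finset.sum_add_distrib] at h

lemma bsum_nonneg (J : Finset (Fin p)) : (0:ℤ) ≤ ∑ j ∈ J, (b j : ℤ) :=
  Finset.sum_nonneg fun j _ => Int.ofNat_nonneg _

lemma rkOf_le_of_mem {v : Fin p → ℤ} (hv : v ∈ Sset rk b)
    (J : Finset (Fin p)) : ∑ j ∈ J, v j ≤ (rkOf (Sset rk b) J : ℤ) := by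
  have h0 : 0 ≤ ∑ j ∈ J, v j := Finset.sum_nonneg fun j _ => hv.1 j
  have hbdd : BddAbove ((fun u => (∑ j ∈ J, u j).toNat) '' (Sset rk b)) := by
    refine ⟨rk J, ?_⟩
    rintro x ⟨u, hu, rfl⟩
    have h1 := Sset_sumJ hu J
    have h2 := bsum_nonneg (b := b) J
    simp only [Int.toNat_le]
    omega
  have h2 : (∑ j ∈ J, v j).toNat ≤ rkOf (Sset rk b) J := le_csSup hbdd ⟨v, hv, rfl⟩
  omega

lemma rkOf_le (hne : (Sset rk b).Nonempty) (J : Finset (Fin p)) :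
    (rkOf (Sset rk b) J : ℤ) + ∑ j ∈ J, (b j : ℤ) ≤ (rk J : ℤ) := by
  obtain ⟨v0, hv0⟩ := hne
  have hv0J := Sset_sumJ hv0 J
  have hv0nn : 0 ≤ ∑ j ∈ J, v0 j := Finset.sum_nonneg fun j _ => hv0.1 j
  have h4 : ((∑ j ∈ J, b j : ℕ) : ℤ) = ∑ j ∈ J, (b j : ℤ) := by push_cast; ring
  have hsup : rkOf (Sset rk b) J ≤ rk J - (∑ j ∈ J, b j) := by
    refine csSup_le (Set.nonempty_of_mem (Set.mem_image_of_mem _ hv0)) ?_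
    rintro x ⟨u, hu, rfl⟩
    have h1 := Sset_sumJ hu J
    simp only [Int.toNat_le]
    omega
  omega

lemma rkOf_univ (hne : (Sset rk b).Nonempty) :
    (rkOf (Sset rk b) Finset.univ : ℤ) = (rk Finset.univ : ℤ) - ∑ j, (b j : ℤ) := by
  obtain ⟨v0, hv0⟩ := hne
  have h1 := Sset_sumUniv hv0
  have h2 := rkOf_le_of_mem hv0 Finset.univ
  have h4 := rkOf_le ⟨v0, hv0⟩ Finset.univ
  omega

lemma indep_down {m : Fin p → ℕ} (hP : IsPolymatroid m rk) {n : Fin p → ℤ}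
    (hbn : ∀ j, (b j : ℤ) ≤ n j) (hn : inIndep rk n) :
    inIndep (rkOf (Sset rk b)) (fun k => n k - (b k : ℤ)) := by
  obtain ⟨w, hw, hge⟩ := extend_to_base hP ((rk Finset.univ : ℤ) - ∑ i, n i).toNat n hn
    (by omega)
  have hv : (fun k => w k - (b k : ℤ)) ∈ Sset rk b := by
    refine ⟨fun j => ?_, ?_⟩
    · show (0:ℤ) ≤ w j - (b j : ℤ)
      have := hge j; have := hbn j; omega
    · have heq : (fun k => (w k - (b k : ℤ)) + (b k : ℤ)) = w := by funext k; ring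
      show inBase rk (fun k => (w k - (b k : ℤ)) + (b k : ℤ))
      rw [heq]; exact hw
  constructor
  · intro i; show (0:ℤ) ≤ n i - (b i : ℤ); have := hbn i; omega
  · intro J
    calc ∑ j ∈ J, (n j - (b j : ℤ)) ≤ ∑ j ∈ J, (w j - (b j : ℤ)) :=
          Finset.sum_le_sum fun j _ => by have := hge j; omega
      _ ≤ _ := rkOf_le_of_mem hv J

lemma indep_up (hne : (Sset rk b).Nonempty) {n : Fin p → ℤ}
    (hn : inIndep (rkOf (Sset rk b)) (fun k => n k - (b k : ℤ))) : inIndep rk n := by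
  constructor
  · intro i
    have h1 : (0:ℤ) ≤ n i - (b i : ℤ) := hn.1 i
    have h2 : (0:ℤ) ≤ (b i : ℤ) := Int.ofNat_nonneg _
    omega
  · intro J
    have h1 : ∑ j ∈ J, (n j - (b j : ℤ)) ≤ (rkOf (Sset rk b) J : ℤ) := hn.2 J
    rw [Finset.sum_sub_distrib] at h1
    have h3 := rkOf_le hne J
    omega

lemma base_iff {m : Fin p → ℕ} (hP : IsPolymatroid m rk) (hne : (Sset rk b).Nonempty)
    {n : Fin p → ℤ} (hbn : ∀ j, (b j : ℤ) ≤ n j) :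
    inBase rk n ↔ inBase (rkOf (Sset rk b)) (fun k => n k - (b k : ℤ)) := by
  have hsum : ∑ j, (n j - (b j : ℤ)) = ∑ j, n j - ∑ j, (b j : ℤ) := Finset.sum_sub_distrib _ _
  have huniv := rkOf_univ (b := b) hne
  constructor
  · rintro ⟨hi, hs⟩
    refine ⟨indep_down hP hbn hi, ?_⟩
    show ∑ j, (n j - (b j : ℤ)) = _
    omega
  · rintro ⟨hi, hs⟩
    have hs' : ∑ j, (n j - (b j : ℤ)) = (rkOf (Sset rk b) Finset.univ : ℤ) := hs
    exact ⟨indep_up hne hi, by omega⟩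

end translate



lemma mobius_eq (rk : Finset (Fin p) → ℕ) (n : Fin p → ℤ) :
    mobius rk n =
      if inIndep rk n then
        if inBase rk n then 1
        else
          1 - ∑ w ∈ ((Finset.Icc (fun _ => (0 : ℤ)) (fun i => (rk {i} : ℤ))).filter
                (fun w => (∀ i, n i < w i) ∧ (∑ i, n i) < (∑ i, w i) ∧ inIndep rk w)).attach,
              mobius rk w.1
      else 0 := by
  rw [mobius]

lemma mobius_translate_aux {m : Fin p → ℕ} {rk : Finset (Fin p) → ℕ} {b : Fin p → ℕ}
    (hP : IsPolymatroid m rk) (hne : (Sset rk b).Nonempty) :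
    ∀ K : ℕ, ∀ n : Fin p → ℤ, (∀ j, (b j : ℤ) ≤ n j) →
      ((rk Finset.univ : ℤ) - ∑ i, n i).toNat ≤ K →
      mobius rk n = mobius (rkOf (Sset rk b)) (fun k => n k - (b k : ℤ)) := by
  intro K
  induction K using Nat.strong_induction_on with
  | _ K ih =>
    intro n hbn hK
    by_cases hind : inIndep rk n
    · by_cases hbase : inBase rk n
      · have hbase' := (base_iff hP hne hbn).mp hbase
        rw [mobius_eq rk n, mobius_eq (rkOf (Sset rk b)),
          if_pos hind, if_pos hbase, if_pos hbase'.1, if_pos hbase']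
      · have hind' : inIndep (rkOf (Sset rk b)) (fun k => n k - (b k : ℤ)) :=
          indep_down hP hbn hind
        have hbase' : ¬ inBase (rkOf (Sset rk b)) (fun k => n k - (b k : ℤ)) :=
          fun h => hbase ((base_iff hP hne hbn).mpr h)
        rw [mobius_eq rk n, mobius_eq (rkOf (Sset rk b)),
          if_pos hind, if_neg hbase, if_pos hind', if_neg hbase']
        congr 1
        rw [Finset.sum_attach _ (fun w => mobius rk w),
          Finset.sum_attach _ (fun w => mobius (rkOf (Sset rk b)) w)]
        have hnlt : ∑ i, n i < (rk Finset.univ : ℤ) :=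
          lt_of_le_of_ne (hind.2 Finset.univ) (fun h => hbase ⟨hind, h⟩)
        refine Finset.sum_nbij' (fun w => fun k => w k - (b k : ℤ))
          (fun u => fun k => u k + (b k : ℤ)) ?_ ?_ ?_ ?_ ?_
        · intro w hw
          simp only [Finset.mem_filter, Finset.mem_Icc, Pi.le_def] at hw ⊢
          obtain ⟨⟨hw0, hw1⟩, hlt, hsl, hwi⟩ := hw
          have hbw : ∀ j, (b j : ℤ) ≤ w j := fun j => by have := hbn j; have := hlt j; omega
          have hwi' : inIndep (rkOf (Sset rk b)) (fun k => w k - (b k : ℤ)) :=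
            indep_down hP hbw hwi
          refine ⟨⟨fun i => by have := hbw i; omega, fun i => ?_⟩, fun i => ?_, ?_, hwi'⟩
          · have h1 : ∑ j ∈ ({i} : Finset (Fin p)), (w j - (b j : ℤ)) ≤
                (rkOf (Sset rk b) {i} : ℤ) := hwi'.2 {i}
            rw [Finset.sum_singleton] at h1
            exact h1
          · show n i - (b i : ℤ) < w i - (b i : ℤ)
            have := hlt i; omega
          · show ∑ i, (n i - (b i : ℤ)) < ∑ i, (w i - (b i : ℤ))
            rw [Finset.sum_sub_distrib, Finset.sum_sub_distrib]
            omega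
        · intro u hu
          simp only [Finset.mem_filter, Finset.mem_Icc, Pi.le_def] at hu ⊢
          obtain ⟨⟨hu0, hu1⟩, hlt, hsl, hui⟩ := hu
          have hui2 : inIndep (rkOf (Sset rk b))
              (fun k => (u k + (b k : ℤ)) - (b k : ℤ)) := by
            have : (fun k => (u k + (b k : ℤ)) - (b k : ℤ)) = u := by funext k; ring
            rw [this]; exact hui
          have huw : inIndep rk (fun k => u k + (b k : ℤ)) := indep_up hne hui2
          refine ⟨⟨fun i => by have := hu0 i; have : (0:ℤ) ≤ (b i : ℤ) := Int.ofNat_nonneg _; omega,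
            fun i => ?_⟩, fun i => ?_, ?_, huw⟩
          · have h1 : ∑ j ∈ ({i} : Finset (Fin p)), (u j + (b j : ℤ)) ≤ (rk {i} : ℤ) :=
              huw.2 {i}
            rw [Finset.sum_singleton] at h1
            exact h1
          · have h2 : (fun k => n k - (b k : ℤ)) i < u i := hlt i
            have := hbn i
            show n i < u i + (b i : ℤ)
            simp only at h2
            omega
          · have h2 : ∑ i, (fun k => n k - (b k : ℤ)) i < ∑ i, u i := hsl
            have h3 : ∑ i, (fun k => n k - (b k : ℤ)) i = ∑ i, n i - ∑ i, (b i : ℤ) :=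
              Finset.sum_sub_distrib _ _
            show ∑ i, n i < ∑ i, (u i + (b i : ℤ))
            rw [Finset.sum_add_distrib]
            omega
        · intro w hw
          funext k; ring
        · intro u hu
          funext k; ring
        · intro w hw
          simp only [Finset.mem_filter] at hw
          obtain ⟨hmem, hlt, hsl, hwi⟩ := hw
          have hbw : ∀ j, (b j : ℤ) ≤ w j := fun j => by have := hbn j; have := hlt j; omega
          have hwle : ∑ i, w i ≤ (rk Finset.univ : ℤ) := hwi.2 Finset.univ
          refine ih ((rk Finset.univ : ℤ) - ∑ i, w i).toNat (by omega) w hbw (le_refl _)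
    · have hind' : ¬ inIndep (rkOf (Sset rk b)) (fun k => n k - (b k : ℤ)) :=
        fun h => hind (indep_up hne h)
      rw [mobius_eq rk n, mobius_eq (rkOf (Sset rk b)), if_neg hind, if_neg hind']


/-- Let `𝒫` be a polymatroid on `[p]` with cage `m` and let
`b ∈ ℕ^p` be such that `𝒫 - b = {n - b : n ∈ B(𝒫) ∩ ℕ^p, n ≥ b}` is nonempty
(it is an M-convex set, hence a polymatroid, with rank function
`rk_S(J) = max_{u∈S} ∑_{j∈J} u_j`). Then for every `n ∈ ℕ^p` with `n ≥ b` one has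
`μ_𝒫(n) = μ_{𝒫 - b}(n - b)`. -/
theorem mobius_translate_restrict
    (p : ℕ) (hp : 1 ≤ p) (m : Fin p → ℕ) (rk : Finset (Fin p) → ℕ)
    (hP : IsPolymatroid m rk) (b : Fin p → ℕ)
    (hne : {v : Fin p → ℤ | (∀ j, 0 ≤ v j) ∧
      inBase rk (fun k => v k + (b k : ℤ))}.Nonempty)
    (n : Fin p → ℕ) (hn : ∀ j, b j ≤ n j) :
    mobius rk (fun k => (n k : ℤ)) =
      mobius (rkOf {v : Fin p → ℤ | (∀ j, 0 ≤ v j) ∧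
          inBase rk (fun k => v k + (b k : ℤ))})
        (fun k => (n k : ℤ) - (b k : ℤ)) := by
  have hne' : (Sset rk b).Nonempty := hne
  exact mobius_translate_aux hP hne'
    ((rk Finset.univ : ℤ) - ∑ i, ((n i : ℤ))).toNat
    (fun k => (n k : ℤ)) (fun j => Int.ofNat_le.mpr (hn j)) (le_refl _)

end CavePaper
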